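/- Define f: ℝ → ℝ by f(x) := x·cosh(2x) − sinh(2x)·log(2·cosh(x)) + (1/2)·tanh(x). Then: (i) −f''(x) + 4f(x) = tanh(x)·sech²(x) for every x ∈ ℝ; (ii) f is odd and f(x) → 0 as x → +∞; and (iii) f(x) > 0 for every x > 0. -/

import Mathlib

open MeasureTheory Real Filter


lemma hda_tanh (x : ℝ) : HasDerivAt Real.tanh ((Real.cosh x)⁻¹^2) x := by
  have h := (Real.hasDerivAt_sinh x).div (Real.hasDerivAt_cosh x) (Real.cosh_pos x).ne'
  have he : Real.tanh = fun y => Real.sinh y / Real.cosh y := funext Real.tanh_eq_sinh_div_cosh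
  rw [he]
  refine h.congr_deriv (Eq.symm ?_)
  have hc := Real.cosh_sq_sub_sinh_sq x
  field_simp
  nlinarith [Real.cosh_pos x]

lemma hda_log2cosh (x : ℝ) : HasDerivAt (fun y => Real.log (2 * Real.cosh y)) (Real.tanh x) x := by
  have h := (((Real.hasDerivAt_cosh x).const_mul 2)).log (by positivity)
  convert h using 1
  rw [Real.tanh_eq_sinh_div_cosh]
  have := (Real.cosh_pos x).ne'
  field_simp

lemma hda_c2 (x : ℝ) : HasDerivAt (fun y => Real.cosh (2*y)) (2 * Real.sinh (2*x)) x := by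
  have h2x : HasDerivAt (fun y : ℝ => 2*y) 2 x := by simpa using (hasDerivAt_id x).const_mul 2
  have h := (Real.hasDerivAt_cosh (2*x)).comp x h2x
  rw [mul_comm]
  exact h

lemma hda_s2 (x : ℝ) : HasDerivAt (fun y => Real.sinh (2*y)) (2 * Real.cosh (2*x)) x := by
  have h2x : HasDerivAt (fun y : ℝ => 2*y) 2 x := by simpa using (hasDerivAt_id x).const_mul 2
  have h := (Real.hasDerivAt_sinh (2*x)).comp x h2x
  rw [mul_comm]
  exact h

noncomputable def FF : ℝ → ℝ := fun x => x * Real.cosh (2*x) - Real.sinh (2*x) * Real.log (2 * Real.cosh x)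
      + (1/2) * Real.tanh x

noncomputable def F1 : ℝ → ℝ := fun x => (Real.cosh (2*x) + x * (2 * Real.sinh (2*x)))
  - (2 * Real.cosh (2*x) * Real.log (2 * Real.cosh x) + Real.sinh (2*x) * Real.tanh x)
  + (1/2) * (Real.cosh x)⁻¹^2

lemma hda_sech2 (x : ℝ) : HasDerivAt (fun y => (Real.cosh y)⁻¹^2) (-(2 * Real.sinh x) / Real.cosh x ^ 3) x := by
  have h := ((Real.hasDerivAt_cosh x).inv (Real.cosh_pos x).ne').pow 2
  refine h.congr_deriv (Eq.symm ?_)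
  have hc := (Real.cosh_pos x).ne'
  push_cast
  norm_num
  field_simp

lemma hFF (x : ℝ) : HasDerivAt FF (F1 x) x := by
  have h := (((hasDerivAt_id x).mul (hda_c2 x)).sub ((hda_s2 x).mul (hda_log2cosh x))).add
    ((hda_tanh x).const_mul (1/2))
  refine h.congr_deriv (Eq.symm ?_)
  simp only [F1, id_eq]
  ring

noncomputable def F2 : ℝ → ℝ := fun x =>
  (2 * Real.sinh (2*x) + (2 * Real.sinh (2*x) + x * (2 * (2 * Real.cosh (2*x)))))
  - ((2 * (2 * Real.sinh (2*x))) * Real.log (2 * Real.cosh x) + 2 * Real.cosh (2*x) * Real.tanh x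
      + (2 * Real.cosh (2*x) * Real.tanh x + Real.sinh (2*x) * (Real.cosh x)⁻¹^2))
  + (1/2) * (-(2 * Real.sinh x) / Real.cosh x ^ 3)

lemma hF1 (x : ℝ) : HasDerivAt F1 (F2 x) x := by
  have h := (((hda_c2 x).add ((hasDerivAt_id x).mul ((hda_s2 x).const_mul 2))).sub
      ((((hda_c2 x).const_mul 2).mul (hda_log2cosh x)).add ((hda_s2 x).mul (hda_tanh x)))).add
    ((hda_sech2 x).const_mul (1/2))
  refine h.congr_deriv (Eq.symm ?_)
  simp only [F2, id_eq]
  ring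

lemma key_id (x : ℝ) : -(F2 x) + 4 * FF x = Real.tanh x * ((Real.cosh x)⁻¹)^2 := by
  have h1 : Real.exp (2*x) = Real.exp x ^ 2 := by rw [two_mul, Real.exp_add, sq]
  have h2 : Real.exp (-(2*x)) = (Real.exp x ^ 2)⁻¹ := by rw [Real.exp_neg, h1]
  have h3 : Real.exp (-x) = (Real.exp x)⁻¹ := Real.exp_neg x
  have hE := Real.exp_pos x
  simp only [FF, F2, Real.tanh_eq_sinh_div_cosh, Real.cosh_eq, Real.sinh_eq, h1, h2, h3]
  have hne : Real.exp x + (Real.exp x)⁻¹ ≠ 0 := by positivity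
  field_simp
  ring


lemma FF_odd (x : ℝ) : FF (-x) = -FF x := by
  simp only [FF, mul_neg, Real.cosh_neg, Real.sinh_neg, Real.tanh_neg]
  ring

lemma log_two_cosh (x : ℝ) : Real.log (2 * Real.cosh x) = x + Real.log (1 + Real.exp (-(2*x))) := by
  have h2x : Real.exp (2*x) = Real.exp x * Real.exp x := by rw [two_mul, Real.exp_add]
  have h2c : 2 * Real.cosh x = Real.exp x * (1 + Real.exp (-(2*x))) := by
    rw [Real.cosh_eq, Real.exp_neg, Real.exp_neg, h2x]
    have := (Real.exp_pos x).ne'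
    field_simp
  rw [h2c, Real.log_mul (Real.exp_pos x).ne' (by positivity), Real.log_exp]

lemma FF_exp_form (x : ℝ) : FF x = x * Real.exp (-(2*x))
    - Real.sinh (2*x) * Real.log (1 + Real.exp (-(2*x))) + (1/2) * Real.tanh x := by
  have h1 : Real.cosh (2*x) - Real.sinh (2*x) = Real.exp (-(2*x)) := Real.cosh_sub_sinh (2*x)
  simp only [FF, log_two_cosh]
  linear_combination x * h1

lemma tendsto_two_mul : Tendsto (fun x : ℝ => 2*x) atTop atTop :=
  Tendsto.const_mul_atTop (by norm_num : (0:ℝ) < 2) tendsto_id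

lemma tendsto_aux1 : Tendsto (fun x : ℝ => x * Real.exp (-(2*x))) atTop (nhds 0) := by
  have hn : Tendsto (fun y : ℝ => y * Real.exp (-y)) atTop (nhds 0) := by
    simpa using Real.tendsto_pow_mul_exp_neg_atTop_nhds_zero 1
  have h := ((hn.comp tendsto_two_mul).const_mul (1/2))
  rw [mul_zero] at h
  refine h.congr fun x => ?_
  simp only [Function.comp]
  ring

lemma tendsto_u : Tendsto (fun x : ℝ => Real.exp (-(2*x))) atTop (nhds 0) := by
  have h2 : Tendsto (fun x : ℝ => -(2*x)) atTop atBot :=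
    tendsto_neg_atTop_atBot.comp tendsto_two_mul
  exact Real.tendsto_exp_atBot.comp h2

lemma tanh_exp (x : ℝ) : Real.tanh x = (1 - Real.exp (-(2*x))) / (1 + Real.exp (-(2*x))) := by
  have hx1 : Real.exp x * Real.exp (-x) = 1 := by rw [← Real.exp_add]; simp
  have hx2 : Real.exp (-(2*x)) = Real.exp (-x) * Real.exp (-x) := by
    rw [← Real.exp_add]; ring_nf
  rw [Real.tanh_eq_sinh_div_cosh, Real.sinh_eq, Real.cosh_eq, hx2,
    div_eq_div_iff (by positivity) (by positivity)]
  linear_combination Real.exp (-x) * hx1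

lemma tendsto_tanh' : Tendsto Real.tanh atTop (nhds 1) := by
  have hnum : Tendsto (fun x : ℝ => 1 - Real.exp (-(2*x))) atTop (nhds (1 - 0)) :=
    tendsto_const_nhds.sub tendsto_u
  have hden : Tendsto (fun x : ℝ => 1 + Real.exp (-(2*x))) atTop (nhds (1 + 0)) :=
    tendsto_const_nhds.add tendsto_u
  have h := hnum.div hden (by norm_num)
  have : ((1:ℝ) - 0) / (1 + 0) = 1 := by norm_num
  rw [this] at h
  exact (Tendsto.congr (fun x => (tanh_exp x).symm) h)

lemma tendsto_slope_log : Tendsto (fun t : ℝ => Real.log (1+t) / t) (nhdsWithin 0 {(0:ℝ)}ᶜ) (nhds 1) := by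
  have hd : HasDerivAt (fun t : ℝ => Real.log (1+t)) 1 0 := by
    have := ((hasDerivAt_id (0:ℝ)).const_add 1).log (by norm_num)
    simpa using this
  rw [hasDerivAt_iff_tendsto_slope] at hd
  refine hd.congr fun t => ?_
  simp only [slope_fun_def, smul_eq_mul, sub_zero, add_zero, Real.log_one, vsub_eq_sub]
  ring

lemma tendsto_aux2 : Tendsto (fun x : ℝ => Real.sinh (2*x) * Real.log (1 + Real.exp (-(2*x))))
    atTop (nhds (1/2)) := by
  have hu' : Tendsto (fun x : ℝ => Real.exp (-(2*x))) atTop (nhdsWithin 0 {(0:ℝ)}ᶜ) := by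
    rw [tendsto_nhdsWithin_iff]
    exact ⟨tendsto_u, Eventually.of_forall fun x => (Real.exp_pos _).ne'⟩
  have h1 : Tendsto (fun x : ℝ => Real.log (1 + Real.exp (-(2*x))) / Real.exp (-(2*x)))
      atTop (nhds 1) := tendsto_slope_log.comp hu'
  have h2 : Tendsto (fun x : ℝ => (1 - Real.exp (-(2*x))^2)/2) atTop (nhds ((1 - 0^2)/2)) :=
    (tendsto_const_nhds.sub (tendsto_u.pow 2)).div_const 2
  have h3 := h2.mul h1
  have he : ((1:ℝ) - 0^2)/2 * 1 = 1/2 := by norm_num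
  rw [he] at h3
  refine h3.congr fun x => ?_
  have ht0 : (0:ℝ) < Real.exp (-(2*x)) := Real.exp_pos _
  have hs : Real.sinh (2*x) = (1 - Real.exp (-(2*x))^2)/(2 * Real.exp (-(2*x))) := by
    rw [Real.sinh_eq]
    have hinv : Real.exp (2*x) = (Real.exp (-(2*x)))⁻¹ := by
      rw [Real.exp_neg, inv_inv]
    rw [hinv, div_eq_div_iff (by norm_num) (by positivity)]
    field_simp
  rw [hs]
  field_simp

lemma FF_tendsto : Tendsto FF atTop (nhds 0) := by
  have h := (tendsto_aux1.sub tendsto_aux2).add (tendsto_tanh'.const_mul (1/2))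
  have he : (0:ℝ) - 1/2 + (1/2) * 1 = 0 := by norm_num
  rw [he] at h
  exact (Tendsto.congr (fun x => (FF_exp_form x).symm) h)

-- log u ≥ 2(u-1)/(u+1) for u ≥ 1
lemma log_ge_pade {u : ℝ} (hu : 1 ≤ u) : 2*(u-1)/(u+1) ≤ Real.log u := by
  set g : ℝ → ℝ := fun v => Real.log v - 2*(v-1)/(v+1) with hg
  have hder : ∀ v ∈ Set.Ici (1:ℝ), HasDerivAt g
      (v⁻¹ - (2*(v+1) - 2*(v-1)*1)/(v+1)^2) v := by
    intro v hv
    have hv0 : (0:ℝ) < v := lt_of_lt_of_le one_pos hv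
    have h1 : HasDerivAt (fun w : ℝ => 2*(w-1)) 2 v := by
      simpa using ((hasDerivAt_id v).sub_const 1).const_mul 2
    have h2 : HasDerivAt (fun w : ℝ => w+1) 1 v := (hasDerivAt_id v).add_const 1
    exact (Real.hasDerivAt_log hv0.ne').sub (h1.div h2 (by linarith))
  have hmono : MonotoneOn g (Set.Ici 1) := by
    apply monotoneOn_of_deriv_nonneg (convex_Ici 1)
    · exact fun v hv => ((hder v hv).continuousAt).continuousWithinAt
    · intro v hv
      rw [interior_Ici] at hv
      exact ((hder v (Set.mem_Ici.mpr (Set.mem_Ioi.mp hv).le)).differentiableAt).differentiableWithinAt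
    · intro v hv
      rw [interior_Ici] at hv
      have hv1 : (1:ℝ) < v := hv
      rw [(hder v hv1.le).deriv]
      have hv0 : (0:ℝ) < v := by linarith
      have hvv : v * v⁻¹ = 1 := mul_inv_cancel₀ hv0.ne'
      rw [sub_nonneg, div_le_iff₀ (by positivity)]
      nlinarith [sq_nonneg (v-1), sq_nonneg (v+1)]
  have h := hmono (Set.self_mem_Ici) hu hu
  simp only [hg, Real.log_one] at h
  norm_num at h
  linarith

-- log(1+t) ≤ t(2+t)/(2(1+t)) for t ≥ 0
lemma log_le_pade {t : ℝ} (ht : 0 ≤ t) : Real.log (1+t) ≤ t*(2+t)/(2*(1+t)) := by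
  set g : ℝ → ℝ := fun s => s*(2+s)/(2*(1+s)) - Real.log (1+s) with hg
  have hder : ∀ s ∈ Set.Ici (0:ℝ), HasDerivAt g
      (((1*(2+s) + s*1)*(2*(1+s)) - s*(2+s)*(2*1))/(2*(1+s))^2 - 1/(1+s)) s := by
    intro s hs
    have hs0 : (0:ℝ) ≤ s := hs
    have h1 : HasDerivAt (fun w : ℝ => w*(2+w)) (1*(2+s) + s*1) s :=
      (hasDerivAt_id s).mul ((hasDerivAt_id s).const_add 2)
    have h2 : HasDerivAt (fun w : ℝ => 2*(1+w)) (2*1) s :=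
      ((hasDerivAt_id s).const_add 1).const_mul 2
    have h3 : HasDerivAt (fun w : ℝ => Real.log (1+w)) (1/(1+s)) s := by
      have := ((hasDerivAt_id s).const_add 1).log (by simp only [id_eq]; positivity)
      simpa using this
    exact (h1.div h2 (by positivity)).sub h3
  have hmono : MonotoneOn g (Set.Ici 0) := by
    apply monotoneOn_of_deriv_nonneg (convex_Ici 0)
    · exact fun v hv => ((hder v hv).continuousAt).continuousWithinAt
    · intro v hv
      rw [interior_Ici] at hv
      exact ((hder v (Set.mem_Ici.mpr (Set.mem_Ioi.mp hv).le)).differentiableAt).differentiableWithinAt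
    · intro v hv
      rw [interior_Ici] at hv
      have hv0 : (0:ℝ) < v := hv
      rw [(hder v hv0.le).deriv, sub_nonneg, div_le_div_iff₀ (by positivity) (by positivity)]
      nlinarith [sq_nonneg v]
  have h := hmono (Set.self_mem_Ici) ht ht
  simp only [hg] at h
  norm_num at h
  linarith




lemma sinh_two_exp (x : ℝ) : Real.sinh (2*x) = (1 - Real.exp (-(2*x))^2)/(2 * Real.exp (-(2*x))) := by
  have ht0 : (0:ℝ) < Real.exp (-(2*x)) := Real.exp_pos _
  rw [Real.sinh_eq]
  have hinv : Real.exp (2*x) = (Real.exp (-(2*x)))⁻¹ := by rw [Real.exp_neg, inv_inv]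
  rw [hinv, div_eq_div_iff (by norm_num) (by positivity)]
  field_simp

lemma cosh_two_exp (x : ℝ) : Real.cosh (2*x) = (1 + Real.exp (-(2*x))^2)/(2 * Real.exp (-(2*x))) := by
  have ht0 : (0:ℝ) < Real.exp (-(2*x)) := Real.exp_pos _
  rw [Real.cosh_eq]
  have hinv : Real.exp (2*x) = (Real.exp (-(2*x)))⁻¹ := by rw [Real.exp_neg, inv_inv]
  rw [hinv, div_eq_div_iff (by norm_num) (by positivity)]
  field_simp

lemma FF_pos {x : ℝ} (hx : 0 < x) : 0 < FF x := by
  set t := Real.exp (-(2*x)) with ht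
  have ht0 : (0:ℝ) < t := Real.exp_pos _
  have ht1 : t < 1 := by
    rw [ht, Real.exp_lt_one_iff]
    linarith
  -- rewrite FF x
  have hFFeq : FF x = x*t - ((1-t^2)/(2*t)) * Real.log (1+t) + (1/2) * ((1-t)/(1+t)) := by
    simp only [FF, log_two_cosh, tanh_exp, sinh_two_exp, cosh_two_exp, ← ht]
    field_simp
    ring
  -- bound x from below
  have hxb : (1-t)/(1+t) ≤ x := by
    have hu : (1:ℝ) ≤ 1/t := by
      rw [le_div_iff₀ ht0]
      linarith
    have h := log_ge_pade hu
    have hlog : Real.log (1/t) = 2*x := by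
      rw [one_div, Real.log_inv, ht, Real.log_exp]
      ring
    rw [hlog] at h
    have he : 2*(1/t-1)/(1/t+1) = 2*(1-t)/(1+t) := by
      rw [div_eq_div_iff (by positivity) (by positivity)]
      field_simp
    rw [he] at h
    rw [div_le_iff₀ (by positivity)] at h ⊢
    linarith [h]
  have hL : Real.log (1+t) ≤ t*(2+t)/(2*(1+t)) := log_le_pade ht0.le
  have hS : (0:ℝ) < (1-t^2)/(2*t) := by
    have : (0:ℝ) < 1 - t^2 := by nlinarith
    positivity
  have step1 : ((1-t^2)/(2*t)) * Real.log (1+t) ≤ ((1-t^2)/(2*t)) * (t*(2+t)/(2*(1+t))) :=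
    mul_le_mul_of_nonneg_left hL hS.le
  have step2 : ((1-t)/(1+t))*t ≤ x*t := mul_le_mul_of_nonneg_right hxb ht0.le
  have key : ((1-t)/(1+t))*t - ((1-t^2)/(2*t)) * (t*(2+t)/(2*(1+t))) + (1/2) * ((1-t)/(1+t))
      = t*(1-t)^2/(4*(1+t)) := by
    field_simp
    ring
  have hpos : (0:ℝ) < t*(1-t)^2/(4*(1+t)) := by
    have h1 : (0:ℝ) < (1-t)^2 := pow_pos (by linarith) 2
    exact div_pos (mul_pos ht0 h1) (by linarith)
  rw [hFFeq]
  linarith [step1, step2, key, hpos]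

/-- Properties of `f(x) = x cosh(2x) - sinh(2x) log(2cosh x) + (1/2) tanh x = (𝓚₊φ)(x)`:
(i) `-f'' + 4f = tanh·sech²`; (ii) `f` is odd and `f(x) → 0` as `x → +∞`;
(iii) `f(x) > 0` for `x > 0`. -/
theorem stmt_17 :
    let f : ℝ → ℝ := fun x => x * Real.cosh (2*x) - Real.sinh (2*x) * Real.log (2 * Real.cosh x)
      + (1/2) * Real.tanh x
    (∀ x : ℝ, -(deriv (deriv f) x) + 4 * f x = Real.tanh x * ((Real.cosh x)⁻¹)^2) ∧
    (∀ x : ℝ, f (-x) = -f x) ∧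
    Tendsto f atTop (nhds 0) ∧
    (∀ x : ℝ, 0 < x → 0 < f x) := by
  intro f
  have hf : f = FF := rfl
  refine ⟨?_, ?_, ?_, ?_⟩
  · intro x
    have hd1 : deriv f = F1 := funext fun y => by rw [hf]; exact (hFF y).deriv
    rw [hd1]
    have hd2 : deriv F1 x = F2 x := (hF1 x).deriv
    rw [hd2, hf]
    exact key_id x
  · intro x
    rw [hf]
    exact FF_odd x
  · rw [hf]
    exact FF_tendsto
  · intro x hx
    rw [hf]
    exact FF_pos hx
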